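/- Let m ∈ ℤ_{>0}, s ∈ ℤ, and a, b ∈ ℤ. For every τ with Im τ > 0 and all z₁, z₂ ∈ ℂ with z₁ ∉ ℤ + ℤτ, one has Φ̃^{[m;s]}(τ, z₁ + aτ, z₂ + bτ) = e^{−2πi m (b z₁ + a z₂)} q^{−mab} Φ̃^{[m;s]}(τ, z₁, z₂), and Φ̃^{[m;s]}(τ, z₁ + a, z₂ + b) = Φ̃^{[m;s]}(τ, z₁, z₂). -/

import Mathlib

noncomputable section

open Complex

/-- `mexp w = e^{2πi w}`. -/
def mexp (w : ℂ) : ℂ := Complex.exp (2 * (Real.pi : ℂ) * Complex.I * w)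

/-- The signed mock theta function `Φ^{sgn[m;s]}(τ,z₁,z₂)`. -/
def PhiS (sgn : ℂ) (m s : ℝ) (τ z₁ z₂ : ℂ) : ℂ :=
  ∑' n : ℤ, sgn ^ n *
    mexp ((m : ℂ) * n * (z₁ + z₂) + (s : ℂ) * z₁ + τ * ((m : ℂ) * n ^ 2 + (s : ℂ) * n)) /
    (1 - mexp (z₁ + n * τ))

/-- The signed theta function `Θ^{sgn}_{j,m}(τ,z)`. -/
def ThetaS (sgn : ℂ) (j m : ℝ) (τ z : ℂ) : ℂ :=
  ∑' n : ℤ, sgn ^ n *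
    mexp ((m : ℂ) * z * ((n : ℂ) + ((j / (2 * m) : ℝ) : ℂ)) +
      τ * (m : ℂ) * ((n : ℂ) + ((j / (2 * m) : ℝ) : ℂ)) ^ 2)

/-- `E(x) = 2∫₀ˣ e^{-πu²} du`. -/
def Efun (x : ℝ) : ℝ := 2 * ∫ u in (0:ℝ)..x, Real.exp (-Real.pi * u ^ 2)

/-- `ψ_{m,n}(τ,z) = (n - 2m Im z / Im τ) √(Im τ / m)`. -/
def psiMN (m n : ℝ) (τ z : ℂ) : ℝ := (n - 2 * m * z.im / τ.im) * Real.sqrt (τ.im / m)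

/-- The real-analytic correction `R^{sgn}_{j,m}(τ,z)`; the summation variable `n ∈ j + 2mℤ`
is written as `n = j + 2mk`, `k ∈ ℤ`, so that `(±1)^{(n-j)/(2m)} = sgn^k`. -/
def RS (sgn : ℂ) (j m : ℝ) (τ z : ℂ) : ℂ :=
  ∑' k : ℤ, sgn ^ k *
    (((Real.sign (j + 2 * m * k - 1 / 2 - j + 2 * m) -
        Efun (psiMN m (j + 2 * m * k) τ z) : ℝ)) : ℂ) *
    Complex.exp (-(Real.pi : ℂ) * Complex.I * (((j + 2 * m * k : ℝ)) : ℂ) ^ 2 * τ / (2 * (m : ℂ))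
      + 2 * (Real.pi : ℂ) * Complex.I * (((j + 2 * m * k : ℝ)) : ℂ) * z)

/-- The modifier `Φ^{sgn[m;s]}_add`; the summation variable `j ∈ s + ℤ`, `s ≤ j < s + 2m`
is written as `j = s + i`, `0 ≤ i < ⌈2m⌉`. -/
def PhiAddS (sgn : ℂ) (m s : ℝ) (τ z₁ z₂ : ℂ) : ℂ :=
  ∑ i ∈ Finset.range ⌈2 * m⌉₊,
    RS sgn (s + i) m τ ((z₁ - z₂) / 2) * ThetaS sgn (s + i) m τ (z₁ + z₂)

/-- The modified (signed) mock theta function `Φ̃^{sgn[m;s]}`. -/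
def PhiTilde (sgn : ℂ) (m s : ℝ) (τ z₁ z₂ : ℂ) : ℂ :=
  PhiS sgn m s τ z₁ z₂ - (1 / 2) * PhiAddS sgn m s τ z₁ z₂

end

noncomputable section
open Complex

lemma mexp_add (a b : ℂ) : mexp (a + b) = mexp a * mexp b := by
  rw [mexp, mexp, mexp, ← Complex.exp_add]; ring_nf

lemma mexp_ne_zero (a : ℂ) : mexp a ≠ 0 := Complex.exp_ne_zero _

lemma mexp_int (n : ℤ) : mexp (n : ℂ) = 1 := by
  rw [mexp]
  simpa [mul_comm, mul_assoc] using Complex.exp_int_mul_two_pi_mul_I n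

lemma mexp_zpow (a : ℂ) (n : ℤ) : mexp a ^ n = mexp ((n : ℂ) * a) := by
  rw [mexp, mexp, ← Complex.exp_int_mul]; ring_nf

lemma mexp_norm (w : ℂ) : ‖mexp w‖ = Real.exp (-(2 * Real.pi * w.im)) := by
  rw [mexp, Complex.norm_exp]
  congr 1
  simp [Complex.mul_re, Complex.mul_im]

lemma two_pi_I_ne_zero' : (2 * (Real.pi : ℂ) * Complex.I) ≠ 0 := by
  simp [Real.pi_ne_zero, Complex.I_ne_zero, Complex.ofReal_ne_zero]

lemma mexp_ne_one {τ z : ℂ} (hz : ∀ x y : ℤ, z ≠ (x : ℂ) + (y : ℂ) * τ) (n : ℤ) :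
    mexp (z + n * τ) ≠ 1 := by
  intro h
  rw [mexp, Complex.exp_eq_one_iff] at h
  obtain ⟨k, hk⟩ := h
  rw [mul_comm (k : ℂ)] at hk
  have h3 : z + n * τ = k := mul_left_cancel₀ two_pi_I_ne_zero' hk
  exact hz k (-n) (by push_cast; linear_combination h3)

lemma summable_mexp_quad {τ : ℂ} (hτ : 0 < τ.im) (μ : ℝ) (hμ : 0 < μ) (β : ℂ) :
    Summable (fun n : ℤ => mexp ((μ : ℂ) * n ^ 2 * τ + β * n)) := by
  have h : ∀ n : ℤ, mexp ((μ : ℂ) * n ^ 2 * τ + β * n) = jacobiTheta₂_term n β (2 * μ * τ) := by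
    intro n
    rw [mexp, jacobiTheta₂_term]
    congr 1
    ring
  rw [funext h]
  exact (summable_jacobiTheta₂_term_iff β _).mpr (by simpa [Complex.mul_im] using by positivity)

lemma summable_gauss (a b : ℝ) (ha : 0 < a) :
    Summable (fun k : ℤ => Real.exp (-a * k ^ 2 + b * k)) := by
  have h := (summable_mexp_quad (τ := Complex.I) (by simp) (a / (2 * Real.pi))
      (by positivity) (((-(b / (2 * Real.pi)) : ℝ) : ℂ) * Complex.I)).norm
  refine h.congr fun k => ?_
  rw [mexp_norm]
  have harg : ((a / (2 * Real.pi) : ℝ) : ℂ) * (k : ℂ) ^ 2 * Complex.I +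
      ((-(b / (2 * Real.pi)) : ℝ) : ℂ) * Complex.I * (k : ℂ) =
      ((a / (2 * Real.pi) * (k : ℝ) ^ 2 - b / (2 * Real.pi) * (k : ℝ) : ℝ) : ℂ) * Complex.I := by
    push_cast; ring
  rw [harg]
  congr 1
  simp only [Complex.mul_im, Complex.I_re, Complex.I_im, Complex.ofReal_re, Complex.ofReal_im]
  field_simp
  ring

lemma gauss_integrable : MeasureTheory.Integrable (fun u : ℝ => Real.exp (-Real.pi * u ^ 2)) :=
  integrable_exp_neg_mul_sq Real.pi_pos

lemma gauss_Ioi_zero : (∫ u in Set.Ioi (0:ℝ), Real.exp (-Real.pi * u ^ 2)) = 1 / 2 := by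
  rw [integral_gaussian_Ioi]
  rw [div_self Real.pi_ne_zero, Real.sqrt_one]

lemma Efun_tail (x : ℝ) (hx : 0 ≤ x) :
    1 - Efun x = 2 * ∫ u in Set.Ioi x, Real.exp (-Real.pi * u ^ 2) := by
  have hsplit : (∫ u in Set.Ioi (0:ℝ), Real.exp (-Real.pi * u ^ 2)) =
      (∫ u in Set.Ioc 0 x, Real.exp (-Real.pi * u ^ 2)) +
      ∫ u in Set.Ioi x, Real.exp (-Real.pi * u ^ 2) := by
    rw [← MeasureTheory.setIntegral_union (Set.Ioc_disjoint_Ioi le_rfl) measurableSet_Ioi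
      gauss_integrable.integrableOn gauss_integrable.integrableOn,
      Set.Ioc_union_Ioi_eq_Ioi hx]
  rw [Efun, intervalIntegral.integral_of_le hx]
  rw [gauss_Ioi_zero] at hsplit
  have := hsplit
  linarith [hsplit]

lemma Efun_neg (x : ℝ) : Efun (-x) = -Efun x := by
  have h : (∫ u in (0:ℝ)..x, Real.exp (-Real.pi * u ^ 2)) =
      ∫ u in (-x)..(-(0:ℝ)), Real.exp (-Real.pi * u ^ 2) := by
    rw [← intervalIntegral.integral_comp_neg (fun u => Real.exp (-Real.pi * u ^ 2))]
    congr 1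
    funext u
    ring_nf
  rw [Efun, Efun]
  rw [h, neg_zero, intervalIntegral.integral_symm]
  ring

lemma Efun_tail_nonneg {x : ℝ} (hx : 0 ≤ x) : 0 ≤ 1 - Efun x := by
  rw [Efun_tail x hx]
  positivity

lemma Efun_tail_le {x : ℝ} (hx : 1 ≤ x) : 1 - Efun x ≤ 2 * Real.exp (-Real.pi * x ^ 2) := by
  have h0 : (0:ℝ) ≤ x := le_trans zero_le_one hx
  rw [Efun_tail x h0]
  have hint : (∫ u in Set.Ioi x, Real.exp (-Real.pi * u ^ 2)) ≤
      ∫ u in Set.Ioi x, Real.exp (-Real.pi * x ^ 2 + x) * Real.exp (-u) := by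
    apply MeasureTheory.setIntegral_mono_on gauss_integrable.integrableOn
    · exact ((exp_neg_integrableOn_Ioi x one_pos).congr_fun (fun u _ => by rw [neg_one_mul])
        measurableSet_Ioi).const_mul _
    · exact measurableSet_Ioi
    · intro u hu
      rw [Set.mem_Ioi] at hu
      rw [← Real.exp_add]
      apply Real.exp_le_exp.mpr
      have hux : (0:ℝ) ≤ u - x := by linarith
      have h2 : 2 * (u - x) ≤ u ^ 2 - x ^ 2 := by nlinarith
      have h3 : u ^ 2 - x ^ 2 ≤ Real.pi * (u ^ 2 - x ^ 2) := by nlinarith [Real.pi_gt_three]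
      linarith
  have heval : (∫ u in Set.Ioi x, Real.exp (-Real.pi * x ^ 2 + x) * Real.exp (-u)) =
      Real.exp (-Real.pi * x ^ 2) := by
    rw [MeasureTheory.integral_const_mul]
    have : (∫ u in Set.Ioi x, Real.exp (-u)) = Real.exp (-x) := integral_exp_neg_Ioi x
    rw [this, ← Real.exp_add]
    ring_nf
  linarith [hint, heval.le, heval.ge]

def rsTerm (j m : ℝ) (τ z : ℂ) (k : ℤ) : ℂ :=
  (((Real.sign (j + 2 * m * k - 1 / 2 - j + 2 * m) -
      Efun (psiMN m (j + 2 * m * k) τ z) : ℝ)) : ℂ) *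
    Complex.exp (-(Real.pi : ℂ) * Complex.I * (((j + 2 * m * k : ℝ)) : ℂ) ^ 2 * τ / (2 * (m : ℂ))
      + 2 * (Real.pi : ℂ) * Complex.I * (((j + 2 * m * k : ℝ)) : ℂ) * z)

lemma RS_one_eq (j m : ℝ) (τ z : ℂ) : RS 1 j m τ z = ∑' k : ℤ, rsTerm j m τ z k := by
  rw [RS]
  apply tsum_congr
  intro k
  rw [one_zpow, one_mul, rsTerm]

lemma rs_exp_re (n m : ℝ) (hm : m ≠ 0) (τ z : ℂ) :
    (-(Real.pi : ℂ) * Complex.I * ((n : ℝ) : ℂ) ^ 2 * τ / (2 * (m : ℂ))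
      + 2 * (Real.pi : ℂ) * Complex.I * ((n : ℝ) : ℂ) * z).re
    = Real.pi * n ^ 2 * τ.im / (2 * m) - 2 * Real.pi * n * z.im := by
  have harg : -(Real.pi : ℂ) * Complex.I * ((n : ℝ) : ℂ) ^ 2 * τ / (2 * (m : ℂ))
      + 2 * (Real.pi : ℂ) * Complex.I * ((n : ℝ) : ℂ) * z
      = ((-(Real.pi * n ^ 2 / (2 * m)) : ℝ) : ℂ) * (Complex.I * τ)
        + ((2 * Real.pi * n : ℝ) : ℂ) * (Complex.I * z) := by
    have hm' : ((m : ℝ) : ℂ) ≠ 0 := by exact_mod_cast Complex.ofReal_ne_zero.mpr hm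
    push_cast
    field_simp
  rw [harg, Complex.add_re]
  simp only [Complex.mul_re, Complex.mul_im, Complex.ofReal_re, Complex.ofReal_im,
    Complex.I_re, Complex.I_im]
  ring

lemma norm_rsTerm (j m : ℝ) (hm : m ≠ 0) (τ z : ℂ) (k : ℤ) :
    ‖rsTerm j m τ z k‖ =
      |Real.sign (j + 2 * m * k - 1 / 2 - j + 2 * m) - Efun (psiMN m (j + 2 * m * k) τ z)| *
      Real.exp (Real.pi * (j + 2 * m * k) ^ 2 * τ.im / (2 * m)
        - 2 * Real.pi * (j + 2 * m * k) * z.im) := by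
  rw [rsTerm, norm_mul, Complex.norm_real, Real.norm_eq_abs,
    Complex.norm_exp, rs_exp_re _ _ hm]

lemma summable_rsTerm (j : ℝ) (m : ℤ) (hm : 0 < m) (τ z : ℂ) (hτ : 0 < τ.im) :
    Summable (rsTerm j (m : ℝ) τ z) := by
  set mr : ℝ := (m : ℝ) with hmr_def
  have hmr : 0 < mr := by rw [hmr_def]; exact_mod_cast hm
  have hmr1 : 1 ≤ mr := by rw [hmr_def]; exact_mod_cast hm
  set c : ℝ := 2 * mr * z.im / τ.im with hc_def
  set Q : ℝ := Real.sqrt (mr / τ.im) with hQ_def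
  set A : ℝ := 2 * Real.pi * mr * τ.im with hA_def
  set B : ℝ := 4 * Real.pi * z.im * mr - 2 * Real.pi * τ.im * j with hB_def
  set C₀ : ℝ := -Real.pi * τ.im * j ^ 2 / (2 * mr) + 2 * Real.pi * z.im * j
      - Real.pi * τ.im * c ^ 2 / mr with hC₀_def
  have hψ : ∀ k : ℤ, psiMN mr (j + 2 * mr * k) τ z
      = (j + 2 * mr * k - c) * Real.sqrt (τ.im / mr) := by
    intro k; rw [psiMN]
  have hψsq : ∀ k : ℤ, (psiMN mr (j + 2 * mr * k) τ z) ^ 2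
      = (j + 2 * mr * k - c) ^ 2 * (τ.im / mr) := by
    intro k
    rw [hψ, mul_pow, Real.sq_sqrt (by positivity)]
  have harith : ∀ k : ℤ,
      -Real.pi * (psiMN mr (j + 2 * mr * k) τ z) ^ 2
        + (Real.pi * (j + 2 * mr * k) ^ 2 * τ.im / (2 * mr)
          - 2 * Real.pi * (j + 2 * mr * k) * z.im)
      = C₀ + (-A * k ^ 2 + B * k) := by
    intro k
    rw [hψsq, hC₀_def, hA_def, hB_def, hc_def]
    have hτ' : τ.im ≠ 0 := ne_of_gt hτ
    field_simp
    ring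
  have hG : Summable (fun k : ℤ => 2 * Real.exp C₀ * Real.exp (-A * k ^ 2 + B * k)) :=
    (summable_gauss A B (by positivity)).mul_left _
  apply Summable.of_norm_bounded_eventually hG
  rw [Filter.eventually_cofinite]
  set K₁ : ℤ := max 0 ⌈(Q + c - j) / (2 * mr)⌉ with hK₁_def
  set K₂ : ℤ := min (-1) ⌊(-Q + c - j) / (2 * mr)⌋ with hK₂_def
  have hQψ : Q * Real.sqrt (τ.im / mr) = 1 := by
    rw [hQ_def, ← Real.sqrt_mul (by positivity)]
    rw [show mr / τ.im * (τ.im / mr) = 1 by field_simp]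
    exact Real.sqrt_one
  have hbound : ∀ k : ℤ, K₁ ≤ k ∨ k ≤ K₂ → ‖rsTerm j mr τ z k‖
      ≤ 2 * Real.exp C₀ * Real.exp (-A * k ^ 2 + B * k) := by
    intro k hk
    rw [norm_rsTerm _ _ (ne_of_gt hmr)]
    have hcoef : |Real.sign (j + 2 * mr * k - 1 / 2 - j + 2 * mr)
        - Efun (psiMN mr (j + 2 * mr * k) τ z)|
        ≤ 2 * Real.exp (-Real.pi * (psiMN mr (j + 2 * mr * k) τ z) ^ 2) := by
      rcases hk with hk | hk
      · -- k ≥ K₁ : positive side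
        have hk0 : (0:ℤ) ≤ k := le_trans (le_max_left _ _) hk
        have hk0' : (0:ℝ) ≤ (k : ℝ) := by exact_mod_cast hk0
        have hkc : ((⌈(Q + c - j) / (2 * mr)⌉ : ℤ) : ℝ) ≤ (k : ℝ) := by
          exact_mod_cast le_trans (le_max_right _ _) hk
        have hx : (Q + c - j) / (2 * mr) ≤ (k : ℝ) := le_trans (Int.le_ceil _) hkc
        have hnc : Q ≤ j + 2 * mr * k - c := by
          have := (div_le_iff₀ (by positivity : (0:ℝ) < 2 * mr)).mp hx
          linarith
        have hψ1 : 1 ≤ psiMN mr (j + 2 * mr * k) τ z := by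
          rw [hψ, ← hQψ]
          apply mul_le_mul_of_nonneg_right hnc (Real.sqrt_nonneg _)
        have hsgn : Real.sign (j + 2 * mr * k - 1 / 2 - j + 2 * mr) = 1 := by
          apply Real.sign_of_pos; nlinarith
        rw [hsgn]
        rw [_root_.abs_of_nonneg (Efun_tail_nonneg (le_trans zero_le_one hψ1))]
        exact Efun_tail_le hψ1
      · -- k ≤ K₂ : negative side
        have hk1 : k ≤ -1 := le_trans hk (min_le_left _ _)
        have hk1' : (k : ℝ) ≤ -1 := by exact_mod_cast hk1
        have hkc : (k : ℝ) ≤ ((⌊(-Q + c - j) / (2 * mr)⌋ : ℤ) : ℝ) := by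
          exact_mod_cast le_trans hk (min_le_right _ _)
        have hx : (k : ℝ) ≤ (-Q + c - j) / (2 * mr) := le_trans hkc (Int.floor_le _)
        have hnc : j + 2 * mr * k - c ≤ -Q := by
          have := (le_div_iff₀ (by positivity : (0:ℝ) < 2 * mr)).mp hx
          linarith
        have hψ1 : psiMN mr (j + 2 * mr * k) τ z ≤ -1 := by
          rw [hψ]
          calc (j + 2 * mr * k - c) * Real.sqrt (τ.im / mr)
              ≤ (-Q) * Real.sqrt (τ.im / mr) :=
                mul_le_mul_of_nonneg_right hnc (Real.sqrt_nonneg _)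
            _ = -1 := by rw [neg_mul, hQψ]
        have hsgn : Real.sign (j + 2 * mr * k - 1 / 2 - j + 2 * mr) = -1 := by
          apply Real.sign_of_neg; nlinarith
        rw [hsgn]
        set ψ := psiMN mr (j + 2 * mr * k) τ z with hψdef
        have hEodd : Efun ψ = -Efun (-ψ) := by rw [← Efun_neg, neg_neg]
        have h1 : -1 - Efun ψ = -(1 - Efun (-ψ)) := by rw [hEodd]; ring
        rw [h1, abs_neg, _root_.abs_of_nonneg (Efun_tail_nonneg (by linarith : (0:ℝ) ≤ -ψ))]
        calc 1 - Efun (-ψ) ≤ 2 * Real.exp (-Real.pi * (-ψ) ^ 2) :=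
              Efun_tail_le (by linarith)
          _ = 2 * Real.exp (-Real.pi * ψ ^ 2) := by rw [neg_sq]
    calc |Real.sign (j + 2 * mr * k - 1 / 2 - j + 2 * mr)
        - Efun (psiMN mr (j + 2 * mr * k) τ z)|
        * Real.exp (Real.pi * (j + 2 * mr * k) ^ 2 * τ.im / (2 * mr)
          - 2 * Real.pi * (j + 2 * mr * k) * z.im)
        ≤ 2 * Real.exp (-Real.pi * (psiMN mr (j + 2 * mr * k) τ z) ^ 2)
          * Real.exp (Real.pi * (j + 2 * mr * k) ^ 2 * τ.im / (2 * mr)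
            - 2 * Real.pi * (j + 2 * mr * k) * z.im) :=
          mul_le_mul_of_nonneg_right hcoef (Real.exp_nonneg _)
      _ = 2 * Real.exp C₀ * Real.exp (-A * k ^ 2 + B * k) := by
          rw [mul_assoc, ← Real.exp_add, harith k, Real.exp_add, ← mul_assoc]
  apply Set.Finite.subset (Set.finite_Icc (K₂ + 1) (K₁ - 1))
  intro k hk
  simp only [Set.mem_setOf_eq] at hk
  by_contra hmem
  simp only [Set.mem_Icc, not_and_or, not_le] at hmem
  rcases hmem with h | h
  · exact hk (hbound k (Or.inr (by omega)))
  · exact hk (hbound k (Or.inl (by omega)))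



lemma mexp_add_int (x : ℂ) (n : ℤ) : mexp (x + (n:ℂ)) = mexp x := by
  rw [mexp_add, mexp_int, mul_one]

def thetaTerm (j m : ℝ) (τ z : ℂ) (n : ℤ) : ℂ :=
  mexp ((m : ℂ) * z * ((n : ℂ) + ((j / (2 * m) : ℝ) : ℂ)) +
      τ * (m : ℂ) * ((n : ℂ) + ((j / (2 * m) : ℝ) : ℂ)) ^ 2)

lemma ThetaS_one_eq (j m : ℝ) (τ z : ℂ) :
    ThetaS 1 j m τ z = ∑' n : ℤ, thetaTerm j m τ z n := by
  rw [ThetaS]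
  apply tsum_congr
  intro n
  rw [one_zpow, one_mul, thetaTerm]

lemma summable_thetaTerm (j : ℝ) (m : ℤ) (hm : 0 < m) (τ z : ℂ) (hτ : 0 < τ.im) :
    Summable (thetaTerm j (m : ℝ) τ z) := by
  have hmr : (0:ℝ) < (m:ℝ) := by exact_mod_cast hm
  set α : ℝ := j / (2 * (m:ℝ)) with hα
  refine ((summable_mexp_quad hτ (m:ℝ) hmr (((m:ℝ):ℂ) * z + 2 * ((m:ℝ):ℂ) * (α:ℂ) * τ)).mul_left
    (mexp (((m:ℝ):ℂ) * z * (α:ℂ) + τ * ((m:ℝ):ℂ) * (α:ℂ) ^ 2))).congr fun n => ?_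
  rw [← mexp_add, thetaTerm]
  congr 1
  ring

lemma theta_shift_tau (j : ℝ) (m : ℤ) (hm : 0 < m) (τ z : ℂ) :
    ThetaS 1 j (m:ℝ) τ (z + τ) =
      mexp (-(m:ℂ) * τ / 4 - (m:ℂ) * z / 2) * ThetaS 1 (j + (m:ℝ)) (m:ℝ) τ z := by
  have hmr : (0:ℝ) < (m:ℝ) := by exact_mod_cast hm
  rw [ThetaS_one_eq, ThetaS_one_eq, ← tsum_mul_left]
  apply tsum_congr
  intro n
  rw [thetaTerm, thetaTerm, ← mexp_add]
  congr 1
  have hα : ((j + (m:ℝ)) / (2 * (m:ℝ)) : ℝ) = j / (2 * (m:ℝ)) + 1 / 2 := by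
    field_simp
  rw [hα]
  push_cast
  ring

lemma theta_period (j : ℝ) (m : ℤ) (hm : 0 < m) (τ z : ℂ) :
    ThetaS 1 (j + 2 * (m:ℝ)) (m:ℝ) τ z = ThetaS 1 j (m:ℝ) τ z := by
  have hmr : (0:ℝ) < (m:ℝ) := by exact_mod_cast hm
  rw [ThetaS_one_eq, ThetaS_one_eq]
  rw [← (Equiv.addRight (1:ℤ)).tsum_eq (thetaTerm j (m:ℝ) τ z)]
  apply tsum_congr
  intro n
  rw [thetaTerm, thetaTerm]
  congr 1
  have hα : ((j + 2 * (m:ℝ)) / (2 * (m:ℝ)) : ℝ) = j / (2 * (m:ℝ)) + 1 := by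
    field_simp
  rw [hα]
  show _ = (m:ℂ) * z * (((n + 1 : ℤ) : ℂ) + _) + τ * (m:ℂ) * (((n + 1 : ℤ) : ℂ) + _) ^ 2
  push_cast
  ring

lemma theta_shift_int (j : ℝ) (m : ℤ) (hm : 0 < m) (c : ℤ) (τ z : ℂ) :
    ThetaS 1 j (m:ℝ) τ (z + (c:ℂ)) = mexp ((c:ℂ) * (j:ℂ) / 2) * ThetaS 1 j (m:ℝ) τ z := by
  have hmr : (0:ℝ) < (m:ℝ) := by exact_mod_cast hm
  have hmc2 : ((m:ℤ):ℂ) ≠ 0 := by exact_mod_cast (by omega : m ≠ 0)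
  rw [ThetaS_one_eq, ThetaS_one_eq, ← tsum_mul_left]
  apply tsum_congr
  intro n
  rw [thetaTerm, thetaTerm, ← mexp_add]
  have harg : ((m:ℝ) : ℂ) * (z + (c:ℂ)) * ((n : ℂ) + ((j / (2 * (m:ℝ)) : ℝ) : ℂ)) +
      τ * ((m:ℝ) : ℂ) * ((n : ℂ) + ((j / (2 * (m:ℝ)) : ℝ) : ℂ)) ^ 2
      = ((c:ℂ) * (j:ℂ) / 2 + (((m:ℝ) : ℂ) * z * ((n : ℂ) + ((j / (2 * (m:ℝ)) : ℝ) : ℂ)) +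
          τ * ((m:ℝ) : ℂ) * ((n : ℂ) + ((j / (2 * (m:ℝ)) : ℝ) : ℂ)) ^ 2)) + ((m * c * n : ℤ) : ℂ) := by
    push_cast
    field_simp
    ring
  rw [harg, mexp_add_int]

def rsCoef (j m : ℝ) (τ z : ℂ) (k : ℤ) : ℝ :=
  Real.sign (j + 2 * m * k - 1 / 2 - j + 2 * m) - Efun (psiMN m (j + 2 * m * k) τ z)

def rsExp (j m : ℝ) (τ z : ℂ) (k : ℤ) : ℂ :=
  Complex.exp (-(Real.pi : ℂ) * Complex.I * (((j + 2 * m * k : ℝ)) : ℂ) ^ 2 * τ / (2 * (m : ℂ))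
      + 2 * (Real.pi : ℂ) * Complex.I * (((j + 2 * m * k : ℝ)) : ℂ) * z)

lemma rsTerm_eq (j m : ℝ) (τ z : ℂ) (k : ℤ) :
    rsTerm j m τ z k = ((rsCoef j m τ z k : ℝ) : ℂ) * rsExp j m τ z k := rfl

lemma rsCoef_shift_tau_neg (j : ℝ) (m : ℤ) (hm : 0 < m) (τ z : ℂ) (hτ : 0 < τ.im) (k : ℤ) :
    rsCoef j (m:ℝ) τ (z - τ / 2) k = rsCoef (j + (m:ℝ)) (m:ℝ) τ z k := by
  have hτ' : τ.im ≠ 0 := ne_of_gt hτ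
  rw [rsCoef, rsCoef]
  congr 1
  · congr 1; ring
  · congr 1
    rw [psiMN, psiMN]
    have h1 : (z - τ/2).im = z.im - τ.im/2 := by simp
    rw [h1]
    congr 1
    field_simp
    ring

lemma rsCoef_shift_tau_pos (j : ℝ) (m : ℤ) (hm : 0 < m) (τ z : ℂ) (hτ : 0 < τ.im) (k : ℤ) :
    rsCoef j (m:ℝ) τ (z + τ / 2) k = rsCoef (j - (m:ℝ)) (m:ℝ) τ z k := by
  have hτ' : τ.im ≠ 0 := ne_of_gt hτ
  rw [rsCoef, rsCoef]
  congr 1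
  · congr 1; ring
  · congr 1
    rw [psiMN, psiMN]
    have h1 : (z + τ/2).im = z.im + τ.im/2 := by simp
    rw [h1]
    congr 1
    field_simp
    ring

lemma rsCoef_shift_half (j : ℝ) (m : ℤ) (c : ℤ) (τ z : ℂ) (k : ℤ) :
    rsCoef j (m:ℝ) τ (z + (c:ℂ) / 2) k = rsCoef j (m:ℝ) τ z k := by
  rw [rsCoef, rsCoef, psiMN, psiMN]
  have h1 : (z + (c:ℂ)/2).im = z.im := by simp
  rw [h1]

lemma rsExp_shift_tau_neg (j : ℝ) (m : ℤ) (hm : 0 < m) (τ z : ℂ) (k : ℤ) :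
    rsExp j (m:ℝ) τ (z - τ / 2) k = mexp (τ * (m:ℂ) / 4 - (m:ℂ) * z) * rsExp (j + (m:ℝ)) (m:ℝ) τ z k := by
  have hmc2 : ((m:ℤ):ℂ) ≠ 0 := by exact_mod_cast (by omega : m ≠ 0)
  rw [rsExp, rsExp, mexp, ← Complex.exp_add]
  congr 1
  push_cast
  field_simp
  ring

lemma rsExp_shift_tau_pos (j : ℝ) (m : ℤ) (hm : 0 < m) (τ z : ℂ) (k : ℤ) :
    rsExp j (m:ℝ) τ (z + τ / 2) k = mexp (τ * (m:ℂ) / 4 + (m:ℂ) * z) * rsExp (j - (m:ℝ)) (m:ℝ) τ z k := by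
  have hmc2 : ((m:ℤ):ℂ) ≠ 0 := by exact_mod_cast (by omega : m ≠ 0)
  rw [rsExp, rsExp, mexp, ← Complex.exp_add]
  congr 1
  push_cast
  field_simp
  ring

lemma rsExp_shift_half (j : ℝ) (m : ℤ) (hm : 0 < m) (c : ℤ) (τ z : ℂ) (k : ℤ) :
    rsExp j (m:ℝ) τ (z + (c:ℂ) / 2) k = mexp ((c:ℂ) * (j:ℂ) / 2) * rsExp j (m:ℝ) τ z k := by
  have hmc2 : ((m:ℤ):ℂ) ≠ 0 := by exact_mod_cast (by omega : m ≠ 0)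
  have key : rsExp j (m:ℝ) τ (z + (c:ℂ) / 2) k
      = mexp (((c:ℂ) * (j:ℂ) / 2 + ((m * k * c : ℤ) : ℂ))) * rsExp j (m:ℝ) τ z k := by
    rw [rsExp, rsExp, mexp, ← Complex.exp_add]
    congr 1
    push_cast
    field_simp
    ring
  rw [key, add_comm ((c:ℂ) * (j:ℂ) / 2), mexp_add, mexp_int, one_mul]

lemma rsExp_period (j : ℝ) (m : ℤ) (τ z : ℂ) (k : ℤ) :
    rsExp (j + 2 * (m:ℝ)) (m:ℝ) τ z k = rsExp j (m:ℝ) τ z (k + 1) := by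
  rw [rsExp, rsExp]
  congr 1
  push_cast
  ring

set_option maxHeartbeats 2000000 in
lemma rs_period (j : ℝ) (m : ℤ) (hm : 0 < m) (τ z : ℂ) (hτ : 0 < τ.im) :
    RS 1 (j + 2 * (m:ℝ)) (m:ℝ) τ z = RS 1 j (m:ℝ) τ z - 2 * rsExp j (m:ℝ) τ z 0 := by
  have hmr : (0:ℝ) < (m:ℝ) := by exact_mod_cast hm
  have hmr1 : (1:ℝ) ≤ (m:ℝ) := by exact_mod_cast hm
  have hterm : ∀ k : ℤ, rsTerm (j + 2 * (m:ℝ)) (m:ℝ) τ z k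
      = rsTerm j (m:ℝ) τ z (k + 1) +
        (if k = (-1 : ℤ) then -(2 * rsExp j (m:ℝ) τ z 0) else 0) := by
    intro k
    have hψeq : psiMN (m:ℝ) ((j + 2 * (m:ℝ)) + 2 * (m:ℝ) * k) τ z
        = psiMN (m:ℝ) (j + 2 * (m:ℝ) * ((k + 1 : ℤ) : ℝ)) τ z := by
      congr 1
      push_cast
      ring
    by_cases hk : k = (-1 : ℤ)
    · subst hk
      have hc1 : rsCoef (j + 2 * (m:ℝ)) (m:ℝ) τ z (-1)
          = rsCoef j (m:ℝ) τ z ((-1) + 1) - 2 := by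
        rw [rsCoef, rsCoef]
        have hs1 : Real.sign ((j + 2 * (m:ℝ)) + 2 * (m:ℝ) * ((-1:ℤ):ℝ) - 1/2 - (j + 2 * (m:ℝ)) + 2 * (m:ℝ)) = -1 := by
          rw [show (j + 2 * (m:ℝ)) + 2 * (m:ℝ) * ((-1:ℤ):ℝ) - 1/2 - (j + 2 * (m:ℝ)) + 2 * (m:ℝ) = -(1/2) by push_cast; ring]
          exact Real.sign_of_neg (by norm_num)
        have hs2 : Real.sign (j + 2 * (m:ℝ) * (((-1:ℤ) + 1 : ℤ):ℝ) - 1/2 - j + 2 * (m:ℝ)) = 1 := by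
          rw [show j + 2 * (m:ℝ) * (((-1:ℤ) + 1 : ℤ):ℝ) - 1/2 - j + 2 * (m:ℝ) = 2 * (m:ℝ) - 1/2 by push_cast; ring]
          exact Real.sign_of_pos (by linarith)
        rw [hs1, hs2, hψeq]
        ring
      rw [if_pos rfl, rsTerm_eq, rsTerm_eq, rsExp_period, hc1]
      have h0 : ((-1 : ℤ) + 1) = (0 : ℤ) := by norm_num
      rw [h0]
      push_cast
      ring
    · have hco : rsCoef (j + 2 * (m:ℝ)) (m:ℝ) τ z k = rsCoef j (m:ℝ) τ z (k + 1) := by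
        rw [rsCoef, rsCoef]
        have e1 : (j + 2 * (m:ℝ)) + 2 * (m:ℝ) * (k:ℝ) - 1/2 - (j + 2 * (m:ℝ)) + 2 * (m:ℝ)
            = 2 * (m:ℝ) * (k:ℝ) + 2 * (m:ℝ) - 1/2 := by ring
        have e2 : j + 2 * (m:ℝ) * (((k:ℤ) + 1 : ℤ):ℝ) - 1/2 - j + 2 * (m:ℝ)
            = 2 * (m:ℝ) * (k:ℝ) + 4 * (m:ℝ) - 1/2 := by push_cast; ring
        have hsgn : Real.sign (2 * (m:ℝ) * (k:ℝ) + 2 * (m:ℝ) - 1/2)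
            = Real.sign (2 * (m:ℝ) * (k:ℝ) + 4 * (m:ℝ) - 1/2) := by
          rcases lt_or_ge k 0 with hneg | hpos
          · have hk2' : (k:ℝ) ≤ -2 := by exact_mod_cast (by omega : k ≤ -2)
            rw [Real.sign_of_neg (by nlinarith), Real.sign_of_neg (by nlinarith)]
          · have hp : (0:ℝ) ≤ (k:ℝ) := by exact_mod_cast hpos
            rw [Real.sign_of_pos (by nlinarith), Real.sign_of_pos (by nlinarith)]
        rw [e1, e2, hsgn, hψeq]
      rw [if_neg hk, add_zero, rsTerm_eq, rsTerm_eq, rsExp_period, hco]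
  have hsum2 : Summable (fun k : ℤ => rsTerm j (m:ℝ) τ z (k + 1)) :=
    ((Equiv.addRight (1:ℤ)).summable_iff).mpr (summable_rsTerm j m hm τ z hτ)
  have hsumδ : Summable (fun k : ℤ => (if k = (-1 : ℤ) then -(2 * rsExp j (m:ℝ) τ z 0) else 0)) := by
    apply summable_of_ne_finset_zero (s := {-1})
    intro k hk
    simp only [Finset.mem_singleton] at hk
    simp [hk]
  rw [RS_one_eq, RS_one_eq]
  calc ∑' k : ℤ, rsTerm (j + 2 * (m:ℝ)) (m:ℝ) τ z k
      = ∑' k : ℤ, (rsTerm j (m:ℝ) τ z (k + 1) +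
          (if k = (-1 : ℤ) then -(2 * rsExp j (m:ℝ) τ z 0) else 0)) := tsum_congr hterm
    _ = (∑' k : ℤ, rsTerm j (m:ℝ) τ z (k + 1)) +
          ∑' k : ℤ, (if k = (-1 : ℤ) then -(2 * rsExp j (m:ℝ) τ z 0) else 0) :=
        Summable.tsum_add hsum2 hsumδ
    _ = (∑' k : ℤ, rsTerm j (m:ℝ) τ z k) - 2 * rsExp j (m:ℝ) τ z 0 := by
        rw [tsum_ite_eq]
        have heq : ∑' k : ℤ, rsTerm j (m:ℝ) τ z (k + 1) = ∑' k : ℤ, rsTerm j (m:ℝ) τ z k := by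
          simpa using (Equiv.addRight (1:ℤ)).tsum_eq (rsTerm j (m:ℝ) τ z)
        rw [heq]
        ring

lemma mexp_zero : mexp 0 = 1 := by rw [mexp, mul_zero, Complex.exp_zero]

lemma mexp_pow (a : ℂ) (r : ℕ) : mexp a ^ r = mexp ((r : ℂ) * a) := by
  rw [mexp, mexp, ← Complex.exp_nat_mul]
  ring_nf

lemma mexp_norm_neg (w : ℂ) : ‖mexp (-w)‖ = ‖mexp w‖⁻¹ := by
  rw [mexp_norm, mexp_norm, ← Real.exp_neg]
  congr 1
  simp

def knum (m j : ℝ) (τ z₁ z₂ : ℂ) (n : ℤ) : ℂ :=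
  mexp ((m : ℂ) * n * (z₁ + z₂) + (j : ℂ) * z₁ + τ * ((m : ℂ) * n ^ 2 + (j : ℂ) * n))

def phiTerm (m s : ℝ) (τ z₁ z₂ : ℂ) (n : ℤ) : ℂ :=
  knum m s τ z₁ z₂ n / (1 - mexp (z₁ + n * τ))

lemma PhiS_one_eq (m s : ℝ) (τ z₁ z₂ : ℂ) :
    PhiS 1 m s τ z₁ z₂ = ∑' n : ℤ, phiTerm m s τ z₁ z₂ n := by
  rw [PhiS]
  apply tsum_congr
  intro n
  rw [one_zpow, one_mul, phiTerm, knum]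

def cJ (j : ℝ) (m : ℤ) (τ z₁ z₂ : ℂ) : ℂ :=
  rsExp j (m:ℝ) τ ((z₁ - z₂) / 2) 0 * ThetaS 1 j (m:ℝ) τ (z₁ + z₂)

lemma knum_eq (m : ℤ) (hm : 0 < m) (j : ℝ) (τ z₁ z₂ : ℂ) (n : ℤ) :
    knum (m:ℝ) j τ z₁ z₂ n
      = rsExp j (m:ℝ) τ ((z₁ - z₂) / 2) 0 * thetaTerm j (m:ℝ) τ (z₁ + z₂) n := by
  have hmc2 : ((m:ℤ):ℂ) ≠ 0 := by exact_mod_cast (by omega : m ≠ 0)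
  rw [knum, thetaTerm, rsExp, mexp, mexp, ← Complex.exp_add]
  congr 1
  push_cast
  field_simp
  ring

lemma summable_knum (m : ℤ) (hm : 0 < m) (j : ℝ) (τ z₁ z₂ : ℂ) (hτ : 0 < τ.im) :
    Summable (knum (m:ℝ) j τ z₁ z₂) := by
  refine ((summable_thetaTerm j m hm τ (z₁ + z₂) hτ).mul_left
    (rsExp j (m:ℝ) τ ((z₁ - z₂) / 2) 0)).congr fun n => (knum_eq m hm j τ z₁ z₂ n).symm

lemma sum_knum (m : ℤ) (hm : 0 < m) (j : ℝ) (τ z₁ z₂ : ℂ) :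
    ∑' n : ℤ, knum (m:ℝ) j τ z₁ z₂ n = cJ j m τ z₁ z₂ := by
  rw [cJ, ThetaS_one_eq, ← tsum_mul_left]
  exact tsum_congr fun n => knum_eq m hm j τ z₁ z₂ n

lemma summable_phiTerm (m : ℤ) (hm : 0 < m) (s : ℝ) (τ z₁ z₂ : ℂ) (hτ : 0 < τ.im)
    (hz : ∀ x y : ℤ, z₁ ≠ (x : ℂ) + (y : ℂ) * τ) :
    Summable (phiTerm (m:ℝ) s τ z₁ z₂) := by
  have hb : (0:ℝ) < 2 * Real.pi * τ.im := by positivity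
  set a : ℝ := -(2 * Real.pi * z₁.im) with ha_def
  set b : ℝ := 2 * Real.pi * τ.im with hb_def
  have hxnorm : ∀ n : ℤ, ‖mexp (z₁ + n * τ)‖ = Real.exp (a - b * n) := by
    intro n
    rw [mexp_norm]
    congr 1
    rw [ha_def, hb_def]
    simp [Complex.add_im, Complex.mul_im]
    ring
  have hexp2 : (2:ℝ) ≤ Real.exp 1 := by
    have := Real.add_one_le_exp 1
    linarith
  set N₁ : ℤ := ⌈(a + 1) / b⌉ with hN₁
  set N₂ : ℤ := ⌊(a - 1) / b⌋ with hN₂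
  have hg : Summable (fun n : ℤ => 2 * ‖knum (m:ℝ) s τ z₁ z₂ n‖
      + 2 * ‖knum (m:ℝ) (s - 1) τ z₁ z₂ n‖) := by
    exact (((summable_knum m hm s τ z₁ z₂ hτ).norm.mul_left 2).add
      (((summable_knum m hm (s - 1) τ z₁ z₂ hτ).norm.mul_left 2)))
  apply Summable.of_norm_bounded_eventually hg
  rw [Filter.eventually_cofinite]
  have hknum1 : ∀ n : ℤ, knum (m:ℝ) s τ z₁ z₂ n * mexp (-(z₁ + n * τ))
      = knum (m:ℝ) (s - 1) τ z₁ z₂ n := by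
    intro n
    rw [knum, knum, ← mexp_add]
    congr 1
    push_cast
    ring
  have hbound : ∀ n : ℤ, N₁ ≤ n ∨ n ≤ N₂ → ‖phiTerm (m:ℝ) s τ z₁ z₂ n‖
      ≤ 2 * ‖knum (m:ℝ) s τ z₁ z₂ n‖ + 2 * ‖knum (m:ℝ) (s - 1) τ z₁ z₂ n‖ := by
    intro n hn
    have hKnonneg : 0 ≤ ‖knum (m:ℝ) s τ z₁ z₂ n‖ := norm_nonneg _
    rw [phiTerm, norm_div]
    rcases hn with hn | hn
    · -- large n : ‖x‖ ≤ 1/2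
      have hn' : (a + 1) / b ≤ (n:ℝ) := le_trans (Int.le_ceil _) (by exact_mod_cast hn)
      have h1 : a - b * n ≤ -1 := by
        have := (div_le_iff₀ hb).mp hn'
        linarith
      have hx : ‖mexp (z₁ + n * τ)‖ ≤ 1/2 := by
        rw [hxnorm n]
        calc Real.exp (a - b * n) ≤ Real.exp (-1) := Real.exp_le_exp.mpr h1
          _ ≤ 1/2 := by
            rw [Real.exp_neg]
            rw [inv_le_comm₀ (Real.exp_pos 1) (by norm_num)]
            linarith
      have hden : (1:ℝ)/2 ≤ ‖1 - mexp (z₁ + n * τ)‖ := by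
        have := norm_sub_norm_le (1 : ℂ) (mexp (z₁ + n * τ))
        rw [norm_one] at this
        linarith
      have : ‖knum (m:ℝ) s τ z₁ z₂ n‖ / ‖1 - mexp (z₁ + n * τ)‖
          ≤ 2 * ‖knum (m:ℝ) s τ z₁ z₂ n‖ := by
        rw [div_le_iff₀ (by linarith : (0:ℝ) < ‖1 - mexp (z₁ + n * τ)‖)]
        nlinarith
      linarith [norm_nonneg (knum (m:ℝ) (s-1) τ z₁ z₂ n)]
    · -- small n : ‖x‖ ≥ 2
      have hn' : (n:ℝ) ≤ (a - 1) / b := le_trans (by exact_mod_cast hn) (Int.floor_le _)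
      have h1 : 1 ≤ a - b * n := by
        have := (le_div_iff₀ hb).mp hn'
        linarith
      have hx : (2:ℝ) ≤ ‖mexp (z₁ + n * τ)‖ := by
        rw [hxnorm n]
        calc (2:ℝ) ≤ Real.exp 1 := hexp2
          _ ≤ Real.exp (a - b * n) := Real.exp_le_exp.mpr h1
      have hden : ‖mexp (z₁ + n * τ)‖ / 2 ≤ ‖1 - mexp (z₁ + n * τ)‖ := by
        have := norm_sub_norm_le (mexp (z₁ + n * τ)) (1 : ℂ)
        rw [norm_one, norm_sub_rev] at this
        linarith
      have hxpos : (0:ℝ) < ‖mexp (z₁ + n * τ)‖ := by linarith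
      have hstep : ‖knum (m:ℝ) s τ z₁ z₂ n‖ / ‖1 - mexp (z₁ + n * τ)‖
          ≤ 2 * (‖knum (m:ℝ) s τ z₁ z₂ n‖ / ‖mexp (z₁ + n * τ)‖) := by
        rw [div_le_iff₀ (by linarith : (0:ℝ) < ‖1 - mexp (z₁ + n * τ)‖)]
        have h2 : ‖knum (m:ℝ) s τ z₁ z₂ n‖ / ‖mexp (z₁ + n * τ)‖ * ‖mexp (z₁ + n * τ)‖
            = ‖knum (m:ℝ) s τ z₁ z₂ n‖ := div_mul_cancel₀ _ (ne_of_gt hxpos)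
        calc ‖knum (m:ℝ) s τ z₁ z₂ n‖
            = ‖knum (m:ℝ) s τ z₁ z₂ n‖ / ‖mexp (z₁ + n * τ)‖ * ‖mexp (z₁ + n * τ)‖ := h2.symm
          _ ≤ ‖knum (m:ℝ) s τ z₁ z₂ n‖ / ‖mexp (z₁ + n * τ)‖ * (2 * ‖1 - mexp (z₁ + n * τ)‖) :=
              mul_le_mul_of_nonneg_left (by linarith) (div_nonneg hKnonneg hxpos.le)
          _ = 2 * (‖knum (m:ℝ) s τ z₁ z₂ n‖ / ‖mexp (z₁ + n * τ)‖) * ‖1 - mexp (z₁ + n * τ)‖ := by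
              ring
      have heq : ‖knum (m:ℝ) s τ z₁ z₂ n‖ / ‖mexp (z₁ + n * τ)‖
          = ‖knum (m:ℝ) (s - 1) τ z₁ z₂ n‖ := by
        rw [← hknum1 n, norm_mul, mexp_norm_neg, div_eq_mul_inv]
      rw [heq] at hstep
      linarith [norm_nonneg (knum (m:ℝ) s τ z₁ z₂ n)]
  apply Set.Finite.subset (Set.finite_Icc (N₂ + 1) (N₁ - 1))
  intro n hn
  simp only [Set.mem_setOf_eq] at hn
  by_contra hmem
  simp only [Set.mem_Icc, not_and_or, not_le] at hmem
  rcases hmem with h | h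
  · exact hn (hbound n (Or.inr (by omega)))
  · exact hn (hbound n (Or.inl (by omega)))

lemma knum_step (m : ℤ) (j : ℝ) (τ z₁ z₂ : ℂ) (n : ℤ) :
    mexp (z₁ + n * τ) * knum (m:ℝ) (j - 1) τ z₁ z₂ n = knum (m:ℝ) j τ z₁ z₂ n := by
  rw [knum, knum, ← mexp_add]
  congr 1
  push_cast
  ring

lemma phi_term_shift2 (m : ℤ) (hm : 0 < m) (s : ℝ) (τ z₁ z₂ : ℂ)
    (hz : ∀ x y : ℤ, z₁ ≠ (x : ℂ) + (y : ℂ) * τ) (n : ℤ) :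
    phiTerm (m:ℝ) s τ z₁ (z₂ + τ) n = mexp (-(((m:ℝ):ℂ)) * z₁) *
      (phiTerm (m:ℝ) s τ z₁ z₂ n
        - ∑ r ∈ Finset.range m.toNat, knum (m:ℝ) (s + (r:ℝ)) τ z₁ z₂ n) := by
  set M : ℕ := m.toNat with hM
  have hMr : ((M:ℕ):ℝ) = (m:ℝ) := by
    rw [hM]; exact_mod_cast congrArg (Int.cast : ℤ → ℝ) (Int.toNat_of_nonneg hm.le)
  set x : ℂ := mexp (z₁ + n * τ) with hx
  have h1x : (1:ℂ) - x ≠ 0 := by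
    intro h
    exact mexp_ne_one hz n (by linear_combination -h)
  have hA : knum (m:ℝ) s τ z₁ (z₂ + τ) n
      = mexp (-(((m:ℝ):ℂ)) * z₁) * knum (m:ℝ) (s + (M:ℝ)) τ z₁ z₂ n := by
    rw [knum, knum, ← mexp_add]
    congr 1
    rw [hMr]
    push_cast
    ring
  have hTel : (1 - x) * ∑ r ∈ Finset.range M, knum (m:ℝ) (s + (r:ℝ)) τ z₁ z₂ n
      = knum (m:ℝ) s τ z₁ z₂ n - knum (m:ℝ) (s + (M:ℝ)) τ z₁ z₂ n := by
    rw [Finset.mul_sum]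
    have hterm : ∀ r ∈ Finset.range M, (1 - x) * knum (m:ℝ) (s + (r:ℝ)) τ z₁ z₂ n
        = knum (m:ℝ) (s + (r:ℝ)) τ z₁ z₂ n - knum (m:ℝ) (s + ((r+1:ℕ):ℝ)) τ z₁ z₂ n := by
      intro r _
      have := knum_step m (s + ((r+1:ℕ):ℝ)) τ z₁ z₂ n
      rw [show (s + ((r+1:ℕ):ℝ) - 1) = s + (r:ℝ) by push_cast; ring] at this
      rw [sub_mul, one_mul, hx, this]
    rw [Finset.sum_congr rfl hterm]
    rw [Finset.sum_range_sub' (fun r => knum (m:ℝ) (s + (r:ℝ)) τ z₁ z₂ n) M]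
    norm_num
  rw [phiTerm, phiTerm, hA]
  rw [← hx]
  have final : mexp (-(((m:ℝ):ℂ)) * z₁) * knum (m:ℝ) (s + (M:ℝ)) τ z₁ z₂ n
      = mexp (-(((m:ℝ):ℂ)) * z₁) * knum (m:ℝ) s τ z₁ z₂ n
        - mexp (-(((m:ℝ):ℂ)) * z₁) *
          ((1 - x) * ∑ r ∈ Finset.range M, knum (m:ℝ) (s + (r:ℝ)) τ z₁ z₂ n) := by
    rw [hTel]
    ring
  calc mexp (-(((m:ℝ):ℂ)) * z₁) * knum (m:ℝ) (s + (M:ℝ)) τ z₁ z₂ n / (1 - x)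
      = (mexp (-(((m:ℝ):ℂ)) * z₁) * knum (m:ℝ) s τ z₁ z₂ n
        - mexp (-(((m:ℝ):ℂ)) * z₁) *
          ((1 - x) * ∑ r ∈ Finset.range M, knum (m:ℝ) (s + (r:ℝ)) τ z₁ z₂ n)) / (1 - x) := by
        rw [final]
    _ = mexp (-(((m:ℝ):ℂ)) * z₁) * (knum (m:ℝ) s τ z₁ z₂ n / (1 - x)
        - ∑ r ∈ Finset.range M, knum (m:ℝ) (s + (r:ℝ)) τ z₁ z₂ n) := by
        field_simp

lemma phi_term_shift1 (m : ℤ) (hm : 0 < m) (s : ℝ) (τ z₁ z₂ : ℂ)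
    (hz : ∀ x y : ℤ, z₁ ≠ (x : ℂ) + (y : ℂ) * τ) (n : ℤ) :
    phiTerm (m:ℝ) s τ (z₁ + τ) z₂ (n - 1) = mexp (-(((m:ℝ):ℂ)) * z₂) *
      (phiTerm (m:ℝ) s τ z₁ z₂ n
        + ∑ r ∈ Finset.range m.toNat, knum (m:ℝ) (s - 1 - (r:ℝ)) τ z₁ z₂ n) := by
  set M : ℕ := m.toNat with hM
  have hMr : ((M:ℕ):ℝ) = (m:ℝ) := by
    rw [hM]; exact_mod_cast congrArg (Int.cast : ℤ → ℝ) (Int.toNat_of_nonneg hm.le)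
  set x : ℂ := mexp (z₁ + n * τ) with hx
  have h1x : (1:ℂ) - x ≠ 0 := by
    intro h
    exact mexp_ne_one hz n (by linear_combination -h)
  have hden : mexp ((z₁ + τ) + ((n - 1 : ℤ):ℂ) * τ) = x := by
    rw [hx]
    congr 1
    push_cast
    ring
  have hA : knum (m:ℝ) s τ (z₁ + τ) z₂ (n - 1)
      = mexp (-(((m:ℝ):ℂ)) * z₂) * knum (m:ℝ) (s - (M:ℝ)) τ z₁ z₂ n := by
    rw [knum, knum, ← mexp_add]
    congr 1
    rw [hMr]
    push_cast
    ring
  have hTel : (1 - x) * ∑ r ∈ Finset.range M, knum (m:ℝ) (s - 1 - (r:ℝ)) τ z₁ z₂ n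
      = knum (m:ℝ) (s - (M:ℝ)) τ z₁ z₂ n - knum (m:ℝ) s τ z₁ z₂ n := by
    rw [Finset.mul_sum]
    have hterm : ∀ r ∈ Finset.range M, (1 - x) * knum (m:ℝ) (s - 1 - (r:ℝ)) τ z₁ z₂ n
        = knum (m:ℝ) (s - 1 - (r:ℝ)) τ z₁ z₂ n - knum (m:ℝ) (s - 1 - (r:ℝ) + 1) τ z₁ z₂ n := by
      intro r _
      have := knum_step m (s - 1 - (r:ℝ) + 1) τ z₁ z₂ n
      rw [show (s - 1 - (r:ℝ) + 1 - 1) = s - 1 - (r:ℝ) by ring] at this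
      rw [sub_mul, one_mul, hx, this]
    rw [Finset.sum_congr rfl hterm]
    have hre : ∀ r : ℕ, knum (m:ℝ) (s - 1 - (r:ℝ)) τ z₁ z₂ n - knum (m:ℝ) (s - 1 - (r:ℝ) + 1) τ z₁ z₂ n
        = (fun t : ℕ => knum (m:ℝ) (s - (t:ℝ)) τ z₁ z₂ n) (r + 1)
          - (fun t : ℕ => knum (m:ℝ) (s - (t:ℝ)) τ z₁ z₂ n) r := by
      intro r
      simp only []
      congr 2 <;> push_cast <;> ring
    rw [Finset.sum_congr rfl fun r _ => hre r]
    rw [Finset.sum_range_sub (fun t : ℕ => knum (m:ℝ) (s - (t:ℝ)) τ z₁ z₂ n) M]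
    norm_num
  rw [phiTerm, phiTerm, hA, hden, ← hx]
  have final : mexp (-(((m:ℝ):ℂ)) * z₂) * knum (m:ℝ) (s - (M:ℝ)) τ z₁ z₂ n
      = mexp (-(((m:ℝ):ℂ)) * z₂) * knum (m:ℝ) s τ z₁ z₂ n
        + mexp (-(((m:ℝ):ℂ)) * z₂) *
          ((1 - x) * ∑ r ∈ Finset.range M, knum (m:ℝ) (s - 1 - (r:ℝ)) τ z₁ z₂ n) := by
    rw [hTel]
    ring
  calc mexp (-(((m:ℝ):ℂ)) * z₂) * knum (m:ℝ) (s - (M:ℝ)) τ z₁ z₂ n / (1 - x)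
      = (mexp (-(((m:ℝ):ℂ)) * z₂) * knum (m:ℝ) s τ z₁ z₂ n
        + mexp (-(((m:ℝ):ℂ)) * z₂) *
          ((1 - x) * ∑ r ∈ Finset.range M, knum (m:ℝ) (s - 1 - (r:ℝ)) τ z₁ z₂ n)) / (1 - x) := by
        rw [final]
    _ = mexp (-(((m:ℝ):ℂ)) * z₂) * (knum (m:ℝ) s τ z₁ z₂ n / (1 - x)
        + ∑ r ∈ Finset.range M, knum (m:ℝ) (s - 1 - (r:ℝ)) τ z₁ z₂ n) := by
        field_simp

lemma phiS_shift2 (m : ℤ) (hm : 0 < m) (s : ℝ) (τ z₁ z₂ : ℂ) (hτ : 0 < τ.im)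
    (hz : ∀ x y : ℤ, z₁ ≠ (x : ℂ) + (y : ℂ) * τ) :
    PhiS 1 (m:ℝ) s τ z₁ (z₂ + τ) = mexp (-(((m:ℝ):ℂ)) * z₁) *
      (PhiS 1 (m:ℝ) s τ z₁ z₂ - ∑ r ∈ Finset.range m.toNat, cJ (s + (r:ℝ)) m τ z₁ z₂) := by
  rw [PhiS_one_eq, PhiS_one_eq]
  rw [tsum_congr (phi_term_shift2 m hm s τ z₁ z₂ hz)]
  rw [tsum_mul_left]
  congr 1
  have hsub := Summable.tsum_sub (f := phiTerm (m:ℝ) s τ z₁ z₂)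
    (g := fun b => ∑ r ∈ Finset.range m.toNat, knum (m:ℝ) (s + (r:ℝ)) τ z₁ z₂ b)
    (summable_phiTerm m hm s τ z₁ z₂ hτ hz)
    (summable_sum fun r _ => summable_knum m hm (s + (r:ℝ)) τ z₁ z₂ hτ)
  rw [hsub]
  congr 1
  have hswap := Summable.tsum_finsetSum (f := fun (r : ℕ) (b : ℤ) => knum (m:ℝ) (s + (r:ℝ)) τ z₁ z₂ b)
    (s := Finset.range m.toNat) (fun r _ => summable_knum m hm (s + (r:ℝ)) τ z₁ z₂ hτ)
  rw [hswap]
  exact Finset.sum_congr rfl fun r _ => sum_knum m hm (s + (r:ℝ)) τ z₁ z₂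

lemma phiS_shift1 (m : ℤ) (hm : 0 < m) (s : ℝ) (τ z₁ z₂ : ℂ) (hτ : 0 < τ.im)
    (hz : ∀ x y : ℤ, z₁ ≠ (x : ℂ) + (y : ℂ) * τ) :
    PhiS 1 (m:ℝ) s τ (z₁ + τ) z₂ = mexp (-(((m:ℝ):ℂ)) * z₂) *
      (PhiS 1 (m:ℝ) s τ z₁ z₂ + ∑ r ∈ Finset.range m.toNat, cJ (s - 1 - (r:ℝ)) m τ z₁ z₂) := by
  rw [PhiS_one_eq, PhiS_one_eq]
  rw [← (Equiv.subRight (1:ℤ)).tsum_eq (phiTerm (m:ℝ) s τ (z₁ + τ) z₂)]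
  have : ∀ n : ℤ, phiTerm (m:ℝ) s τ (z₁ + τ) z₂ ((Equiv.subRight (1:ℤ)) n)
      = mexp (-(((m:ℝ):ℂ)) * z₂) * (phiTerm (m:ℝ) s τ z₁ z₂ n
        + ∑ r ∈ Finset.range m.toNat, knum (m:ℝ) (s - 1 - (r:ℝ)) τ z₁ z₂ n) := by
    intro n
    exact phi_term_shift1 m hm s τ z₁ z₂ hz n
  rw [tsum_congr this, tsum_mul_left]
  congr 1
  have hadd := Summable.tsum_add (f := phiTerm (m:ℝ) s τ z₁ z₂)
    (g := fun b => ∑ r ∈ Finset.range m.toNat, knum (m:ℝ) (s - 1 - (r:ℝ)) τ z₁ z₂ b)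
    (summable_phiTerm m hm s τ z₁ z₂ hτ hz)
    (summable_sum fun r _ => summable_knum m hm (s - 1 - (r:ℝ)) τ z₁ z₂ hτ)
  rw [hadd]
  congr 1
  have hswap := Summable.tsum_finsetSum (f := fun (r : ℕ) (b : ℤ) => knum (m:ℝ) (s - 1 - (r:ℝ)) τ z₁ z₂ b)
    (s := Finset.range m.toNat) (fun r _ => summable_knum m hm (s - 1 - (r:ℝ)) τ z₁ z₂ hτ)
  rw [hswap]
  exact Finset.sum_congr rfl fun r _ => sum_knum m hm (s - 1 - (r:ℝ)) τ z₁ z₂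

lemma RS_shift_tau_neg (j : ℝ) (m : ℤ) (hm : 0 < m) (τ z : ℂ) (hτ : 0 < τ.im) :
    RS 1 j (m:ℝ) τ (z - τ / 2) =
      mexp (τ * (m:ℂ) / 4 - (m:ℂ) * z) * RS 1 (j + (m:ℝ)) (m:ℝ) τ z := by
  rw [RS_one_eq, RS_one_eq, ← tsum_mul_left]
  refine tsum_congr fun k => ?_
  rw [rsTerm_eq, rsTerm_eq, rsCoef_shift_tau_neg j m hm τ z hτ k, rsExp_shift_tau_neg j m hm τ z k]
  ring

lemma RS_shift_tau_pos (j : ℝ) (m : ℤ) (hm : 0 < m) (τ z : ℂ) (hτ : 0 < τ.im) :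
    RS 1 j (m:ℝ) τ (z + τ / 2) =
      mexp (τ * (m:ℂ) / 4 + (m:ℂ) * z) * RS 1 (j - (m:ℝ)) (m:ℝ) τ z := by
  rw [RS_one_eq, RS_one_eq, ← tsum_mul_left]
  refine tsum_congr fun k => ?_
  rw [rsTerm_eq, rsTerm_eq, rsCoef_shift_tau_pos j m hm τ z hτ k, rsExp_shift_tau_pos j m hm τ z k]
  ring

lemma RS_shift_half (j : ℝ) (m : ℤ) (hm : 0 < m) (c : ℤ) (τ z : ℂ) :
    RS 1 j (m:ℝ) τ (z + (c:ℂ) / 2) = mexp ((c:ℂ) * (j:ℂ) / 2) * RS 1 j (m:ℝ) τ z := by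
  rw [RS_one_eq, RS_one_eq, ← tsum_mul_left]
  refine tsum_congr fun k => ?_
  rw [rsTerm_eq, rsTerm_eq, rsCoef_shift_half j m c τ z k, rsExp_shift_half j m hm c τ z k]
  ring

lemma ceil2m (m : ℤ) (hm : 0 < m) : ⌈2 * (m:ℝ)⌉₊ = 2 * m.toNat := by
  rw [show (2 * (m:ℝ)) = ((2 * m : ℤ) : ℝ) by push_cast; ring, Nat.ceil_intCast]
  omega

lemma mexp_mul_mul (A B C : ℂ) (h : A + B = C) (X Y : ℂ) :
    mexp A * X * (mexp B * Y) = mexp C * (X * Y) := by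
  rw [← h, mexp_add]
  ring

lemma mexp_mul_cancel (A B : ℂ) (c : ℤ) (h : A + B = (c:ℂ)) (X Y : ℂ) :
    mexp A * X * (mexp B * Y) = X * Y := by
  rw [mexp_mul_mul A B (c:ℂ) h X Y, mexp_int, one_mul]

lemma phiAdd_shift2 (m : ℤ) (hm : 0 < m) (s : ℝ) (τ z₁ z₂ : ℂ) (hτ : 0 < τ.im) :
    PhiAddS 1 (m:ℝ) s τ z₁ (z₂ + τ) = mexp (-(((m:ℝ):ℂ)) * z₁) *
      (PhiAddS 1 (m:ℝ) s τ z₁ z₂ - 2 * ∑ r ∈ Finset.range m.toNat, cJ (s + (r:ℝ)) m τ z₁ z₂) := by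
  set M : ℕ := m.toNat with hM
  have hMr : ((M:ℕ):ℝ) = (m:ℝ) := by
    rw [hM]; exact_mod_cast congrArg (Int.cast : ℤ → ℝ) (Int.toNat_of_nonneg hm.le)
  set g : ℕ → ℂ := fun t => RS 1 (s + (t:ℝ)) (m:ℝ) τ ((z₁ - z₂) / 2)
    * ThetaS 1 (s + (t:ℝ)) (m:ℝ) τ (z₁ + z₂) with hg
  have stepA : PhiAddS 1 (m:ℝ) s τ z₁ (z₂ + τ)
      = mexp (-(((m:ℝ):ℂ)) * z₁) * ∑ i ∈ Finset.range (2 * M), g (i + M) := by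
    rw [PhiAddS, ceil2m m hm, Finset.mul_sum, ← hM]
    refine Finset.sum_congr rfl fun i _ => ?_
    have e1 : (z₁ - (z₂ + τ)) / 2 = (z₁ - z₂) / 2 - τ / 2 := by ring
    have e2 : z₁ + (z₂ + τ) = (z₁ + z₂) + τ := by ring
    rw [e1, e2, RS_shift_tau_neg (s + (i:ℝ)) m hm τ _ hτ, theta_shift_tau (s + (i:ℝ)) m hm τ _]
    have e3 : (s + (i:ℝ)) + (m:ℝ) = s + ((i + M : ℕ) : ℝ) := by
      push_cast
      rw [hMr]
      ring
    rw [e3, hg]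
    exact mexp_mul_mul _ _ _ (by push_cast; ring) _ _
  have hper : ∀ i : ℕ, g (i + 2 * M) = g i - 2 * cJ (s + (i:ℝ)) m τ z₁ z₂ := by
    intro i
    have e5 : s + ((i + 2 * M : ℕ) : ℝ) = (s + (i:ℝ)) + 2 * (m:ℝ) := by
      push_cast
      rw [hMr]
      ring
    rw [hg]
    simp only []
    rw [e5, rs_period (s + (i:ℝ)) m hm τ _ hτ, theta_period (s + (i:ℝ)) m hm τ _, cJ]
    ring
  have stepB : ∑ i ∈ Finset.range (2 * M), g (i + M)
      = ∑ i ∈ Finset.range (2 * M), g i - 2 * ∑ r ∈ Finset.range M, cJ (s + (r:ℝ)) m τ z₁ z₂ := by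
    have h1 : ∑ i ∈ Finset.range (2 * M), g (i + M)
        = ∑ i ∈ Finset.range M, g (i + M) + ∑ i ∈ Finset.range M, g ((M + i) + M) := by
      rw [show 2 * M = M + M by ring]
      exact Finset.sum_range_add (fun i => g (i + M)) M M
    have h2 : ∑ i ∈ Finset.range (2 * M), g i
        = ∑ i ∈ Finset.range M, g i + ∑ i ∈ Finset.range M, g (M + i) := by
      rw [show 2 * M = M + M by ring]
      exact Finset.sum_range_add g M M
    have h3 : ∑ i ∈ Finset.range M, g ((M + i) + M)
        = ∑ i ∈ Finset.range M, g i - 2 * ∑ r ∈ Finset.range M, cJ (s + (r:ℝ)) m τ z₁ z₂ := by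
      rw [Finset.mul_sum, ← Finset.sum_sub_distrib]
      refine Finset.sum_congr rfl fun i _ => ?_
      rw [show (M + i) + M = i + 2 * M by ring, hper i]
    have h4 : ∑ i ∈ Finset.range M, g (i + M) = ∑ i ∈ Finset.range M, g (M + i) :=
      Finset.sum_congr rfl fun i _ => congrArg g (by ring)
    rw [h1, h2, h3, h4]
    ring
  have base : PhiAddS 1 (m:ℝ) s τ z₁ z₂ = ∑ i ∈ Finset.range (2 * M), g i := by
    rw [PhiAddS, ceil2m m hm, ← hM]
  rw [stepA, stepB, base]

lemma phiAdd_shift1 (m : ℤ) (hm : 0 < m) (s : ℝ) (τ z₁ z₂ : ℂ) (hτ : 0 < τ.im) :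
    PhiAddS 1 (m:ℝ) s τ (z₁ + τ) z₂ = mexp (-(((m:ℝ):ℂ)) * z₂) *
      (PhiAddS 1 (m:ℝ) s τ z₁ z₂ + 2 * ∑ r ∈ Finset.range m.toNat, cJ (s - 1 - (r:ℝ)) m τ z₁ z₂) := by
  set M : ℕ := m.toNat with hM
  have hMr : ((M:ℕ):ℝ) = (m:ℝ) := by
    rw [hM]; exact_mod_cast congrArg (Int.cast : ℤ → ℝ) (Int.toNat_of_nonneg hm.le)
  set g : ℕ → ℂ := fun t => RS 1 ((s - (m:ℝ)) + (t:ℝ)) (m:ℝ) τ ((z₁ - z₂) / 2)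
    * ThetaS 1 ((s - (m:ℝ)) + (t:ℝ)) (m:ℝ) τ (z₁ + z₂) with hg
  have stepA : PhiAddS 1 (m:ℝ) s τ (z₁ + τ) z₂
      = mexp (-(((m:ℝ):ℂ)) * z₂) * ∑ i ∈ Finset.range (2 * M), g i := by
    rw [PhiAddS, ceil2m m hm, Finset.mul_sum, ← hM]
    refine Finset.sum_congr rfl fun i _ => ?_
    have e1 : ((z₁ + τ) - z₂) / 2 = (z₁ - z₂) / 2 + τ / 2 := by ring
    have e2 : (z₁ + τ) + z₂ = (z₁ + z₂) + τ := by ring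
    rw [e1, e2, RS_shift_tau_pos (s + (i:ℝ)) m hm τ _ hτ, theta_shift_tau (s + (i:ℝ)) m hm τ _]
    have e3 : (s + (i:ℝ)) + (m:ℝ) = ((s + (i:ℝ)) - (m:ℝ)) + 2 * (m:ℝ) := by ring
    rw [e3, theta_period ((s + (i:ℝ)) - (m:ℝ)) m hm τ _]
    have e4 : (s + (i:ℝ)) - (m:ℝ) = (s - (m:ℝ)) + (i:ℝ) := by ring
    rw [e4, hg]
    exact mexp_mul_mul _ _ _ (by push_cast; ring) _ _
  have hper : ∀ i : ℕ, g i = g (i + 2 * M) + 2 * cJ ((s - (m:ℝ)) + (i:ℝ)) m τ z₁ z₂ := by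
    intro i
    have e5 : (s - (m:ℝ)) + ((i + 2 * M : ℕ) : ℝ) = ((s - (m:ℝ)) + (i:ℝ)) + 2 * (m:ℝ) := by
      push_cast
      rw [hMr]
      ring
    rw [hg]
    simp only []
    rw [e5, rs_period ((s - (m:ℝ)) + (i:ℝ)) m hm τ _ hτ,
      theta_period ((s - (m:ℝ)) + (i:ℝ)) m hm τ _, cJ]
    ring
  have base : PhiAddS 1 (m:ℝ) s τ z₁ z₂ = ∑ i ∈ Finset.range (2 * M), g (i + M) := by
    rw [PhiAddS, ceil2m m hm, ← hM]
    refine Finset.sum_congr rfl fun i _ => ?_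
    have e6 : s + (i:ℝ) = (s - (m:ℝ)) + ((i + M : ℕ) : ℝ) := by
      push_cast
      rw [hMr]
      ring
    rw [e6, hg]
  have stepB : ∑ i ∈ Finset.range (2 * M), g i
      = ∑ i ∈ Finset.range (2 * M), g (i + M)
        + 2 * ∑ i ∈ Finset.range M, cJ ((s - (m:ℝ)) + (i:ℝ)) m τ z₁ z₂ := by
    have h1 : ∑ i ∈ Finset.range (2 * M), g (i + M)
        = ∑ i ∈ Finset.range M, g (i + M) + ∑ i ∈ Finset.range M, g ((M + i) + M) := by
      rw [show 2 * M = M + M by ring]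
      exact Finset.sum_range_add (fun i => g (i + M)) M M
    have h2 : ∑ i ∈ Finset.range (2 * M), g i
        = ∑ i ∈ Finset.range M, g i + ∑ i ∈ Finset.range M, g (M + i) := by
      rw [show 2 * M = M + M by ring]
      exact Finset.sum_range_add g M M
    have h3 : ∑ i ∈ Finset.range M, g i
        = ∑ i ∈ Finset.range M, g ((M + i) + M)
          + 2 * ∑ i ∈ Finset.range M, cJ ((s - (m:ℝ)) + (i:ℝ)) m τ z₁ z₂ := by
      rw [Finset.mul_sum, ← Finset.sum_add_distrib]
      refine Finset.sum_congr rfl fun i _ => ?_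
      rw [show (M + i) + M = i + 2 * M by ring]
      exact hper i
    have h4 : ∑ i ∈ Finset.range M, g (i + M) = ∑ i ∈ Finset.range M, g (M + i) :=
      Finset.sum_congr rfl fun i _ => congrArg g (by ring)
    rw [h1, h2, h3, h4]
    ring
  have stepD : ∑ i ∈ Finset.range M, cJ ((s - (m:ℝ)) + (i:ℝ)) m τ z₁ z₂
      = ∑ r ∈ Finset.range M, cJ (s - 1 - (r:ℝ)) m τ z₁ z₂ := by
    rw [← Finset.sum_range_reflect (fun i => cJ ((s - (m:ℝ)) + (i:ℝ)) m τ z₁ z₂) M]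
    refine Finset.sum_congr rfl fun r hr => ?_
    have hrM : r < M := Finset.mem_range.mp hr
    have hcast : ((M - 1 - r : ℕ) : ℝ) = (M:ℝ) - 1 - (r:ℝ) := by
      have h0 : (M - 1 - r : ℕ) = M - (1 + r) := by omega
      rw [h0, Nat.cast_sub (by omega : 1 + r ≤ M)]
      push_cast
      ring
    rw [show (s - (m:ℝ)) + ((M - 1 - r : ℕ) : ℝ) = s - 1 - (r:ℝ) by rw [hcast, hMr]; ring]
  rw [stepA, stepB, stepD, base]

lemma phiTilde_shift1 (m : ℤ) (hm : 0 < m) (s : ℝ) (τ z₁ z₂ : ℂ) (hτ : 0 < τ.im)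
    (hz : ∀ x y : ℤ, z₁ ≠ (x : ℂ) + (y : ℂ) * τ) :
    PhiTilde 1 (m:ℝ) s τ (z₁ + τ) z₂ = mexp (-(((m:ℝ):ℂ)) * z₂) * PhiTilde 1 (m:ℝ) s τ z₁ z₂ := by
  rw [PhiTilde, PhiTilde, phiS_shift1 m hm s τ z₁ z₂ hτ hz, phiAdd_shift1 m hm s τ z₁ z₂ hτ]
  ring

lemma phiTilde_shift2 (m : ℤ) (hm : 0 < m) (s : ℝ) (τ z₁ z₂ : ℂ) (hτ : 0 < τ.im)
    (hz : ∀ x y : ℤ, z₁ ≠ (x : ℂ) + (y : ℂ) * τ) :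
    PhiTilde 1 (m:ℝ) s τ z₁ (z₂ + τ) = mexp (-(((m:ℝ):ℂ)) * z₁) * PhiTilde 1 (m:ℝ) s τ z₁ z₂ := by
  rw [PhiTilde, PhiTilde, phiS_shift2 m hm s τ z₁ z₂ hτ hz, phiAdd_shift2 m hm s τ z₁ z₂ hτ]
  ring

lemma phiS_int (m : ℤ) (s a b : ℤ) (τ z₁ z₂ : ℂ) :
    PhiS 1 (m:ℝ) ((s:ℤ):ℝ) τ (z₁ + (a:ℂ)) (z₂ + (b:ℂ)) = PhiS 1 (m:ℝ) ((s:ℤ):ℝ) τ z₁ z₂ := by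
  rw [PhiS_one_eq, PhiS_one_eq]
  refine tsum_congr fun n => ?_
  rw [phiTerm, phiTerm]
  congr 1
  · rw [knum, knum]
    rw [show ((m:ℝ):ℂ) * n * ((z₁ + (a:ℂ)) + (z₂ + (b:ℂ))) + (((s:ℤ):ℝ):ℂ) * (z₁ + (a:ℂ))
        + τ * (((m:ℝ):ℂ) * n ^ 2 + (((s:ℤ):ℝ):ℂ) * n)
        = (((m:ℝ):ℂ) * n * (z₁ + z₂) + (((s:ℤ):ℝ):ℂ) * z₁
          + τ * (((m:ℝ):ℂ) * n ^ 2 + (((s:ℤ):ℝ):ℂ) * n)) + ((m * n * (a + b) + s * a : ℤ):ℂ)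
      by push_cast; ring]
    rw [mexp_add_int]
  · rw [show z₁ + (a:ℂ) + n * τ = (z₁ + n * τ) + ((a:ℤ):ℂ) by push_cast; ring, mexp_add_int]

lemma phiAdd_int (m : ℤ) (hm : 0 < m) (s a b : ℤ) (τ z₁ z₂ : ℂ) :
    PhiAddS 1 (m:ℝ) ((s:ℤ):ℝ) τ (z₁ + (a:ℂ)) (z₂ + (b:ℂ)) = PhiAddS 1 (m:ℝ) ((s:ℤ):ℝ) τ z₁ z₂ := by
  rw [PhiAddS, PhiAddS]
  refine Finset.sum_congr rfl fun i _ => ?_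
  have e1 : ((z₁ + (a:ℂ)) - (z₂ + (b:ℂ))) / 2 = (z₁ - z₂) / 2 + ((a - b : ℤ):ℂ) / 2 := by
    push_cast; ring
  have e2 : (z₁ + (a:ℂ)) + (z₂ + (b:ℂ)) = (z₁ + z₂) + ((a + b : ℤ):ℂ) := by
    push_cast; ring
  rw [e1, e2, RS_shift_half (((s:ℤ):ℝ) + (i:ℝ)) m hm (a - b) τ _,
    theta_shift_int (((s:ℤ):ℝ) + (i:ℝ)) m hm (a + b) τ _]
  exact mexp_mul_cancel _ _ (a * (s + (i:ℤ))) (by push_cast; ring) _ _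

lemma phiTilde_int (m : ℤ) (hm : 0 < m) (s a b : ℤ) (τ z₁ z₂ : ℂ) :
    PhiTilde 1 (m:ℝ) ((s:ℤ):ℝ) τ (z₁ + (a:ℂ)) (z₂ + (b:ℂ)) = PhiTilde 1 (m:ℝ) ((s:ℤ):ℝ) τ z₁ z₂ := by
  rw [PhiTilde, PhiTilde, phiS_int m s a b τ z₁ z₂, phiAdd_int m hm s a b τ z₁ z₂]

end

/-- elliptic transformation properties of `Φ̃^{[m;s]}`, `m ∈ ℤ_{>0}`,
`s, a, b ∈ ℤ`; here `q^{-mab} = mexp (τ * (-(m*a*b)))`. -/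
theorem stmt2 (m s a b : ℤ) (hm : 0 < m) (τ z₁ z₂ : ℂ) (hτ : 0 < τ.im)
    (hz : ∀ x y : ℤ, z₁ ≠ (x : ℂ) + (y : ℂ) * τ) :
    PhiTilde 1 (m : ℝ) (s : ℝ) τ (z₁ + a * τ) (z₂ + b * τ) =
      mexp (-(m : ℂ) * ((b : ℂ) * z₁ + (a : ℂ) * z₂)) * mexp (τ * (-((m : ℂ) * a * b))) *
        PhiTilde 1 (m : ℝ) (s : ℝ) τ z₁ z₂ ∧
    PhiTilde 1 (m : ℝ) (s : ℝ) τ (z₁ + a) (z₂ + b) = PhiTilde 1 (m : ℝ) (s : ℝ) τ z₁ z₂ := by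
  have hz' : ∀ c : ℤ, ∀ x y : ℤ, z₁ + (c:ℂ) * τ ≠ (x:ℂ) + (y:ℂ) * τ := by
    intro c x y h
    exact hz x (y - c) (by push_cast; linear_combination h)
  constructor
  · have H1 : ∀ c : ℤ, ∀ v : ℂ, PhiTilde 1 (m:ℝ) (s:ℝ) τ (z₁ + (c:ℂ) * τ) v
        = mexp (-(((m:ℝ):ℂ)) * (c:ℂ) * v) * PhiTilde 1 (m:ℝ) (s:ℝ) τ z₁ v := by
      intro c
      induction c using Int.induction_on with
      | zero =>
        intro v
        norm_num [mexp_zero]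
      | succ k ih =>
        intro v
        have e : z₁ + (((k:ℤ) + 1 : ℤ):ℂ) * τ = (z₁ + ((k:ℤ):ℂ) * τ) + τ := by push_cast; ring
        rw [show (((k:ℤ) + 1 : ℤ):ℂ) = (((k:ℤ):ℂ) + 1) by push_cast; ring] at e ⊢
        rw [e, phiTilde_shift1 m hm (s:ℝ) τ (z₁ + ((k:ℤ):ℂ) * τ) v hτ (hz' (k:ℤ)), ih v,
          ← mul_assoc, ← mexp_add]
        congr 2
        push_cast
        ring
      | pred k ih =>
        intro v
        have step := phiTilde_shift1 m hm (s:ℝ) τ (z₁ + ((-(k:ℤ) - 1 : ℤ):ℂ) * τ) v hτ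
          (hz' (-(k:ℤ) - 1))
        have e : (z₁ + ((-(k:ℤ) - 1 : ℤ):ℂ) * τ) + τ = z₁ + ((-(k:ℤ) : ℤ):ℂ) * τ := by
          push_cast; ring
        rw [e, ih v] at step
        have key : PhiTilde 1 (m:ℝ) (s:ℝ) τ (z₁ + ((-(k:ℤ) - 1 : ℤ):ℂ) * τ) v
            = mexp ((((m:ℝ):ℂ)) * v) *
              (mexp (-(((m:ℝ):ℂ)) * ((-(k:ℤ) : ℤ):ℂ) * v) * PhiTilde 1 (m:ℝ) (s:ℝ) τ z₁ v) := by
          rw [step, ← mul_assoc, ← mexp_add,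
            show (((m:ℝ):ℂ)) * v + -(((m:ℝ):ℂ)) * v = 0 by ring, mexp_zero, one_mul]
        rw [show ((-(k:ℤ) - 1 : ℤ):ℂ) = (-((k:ℤ):ℂ) - 1) by push_cast; ring] at key ⊢
        rw [key, ← mul_assoc, ← mexp_add]
        congr 2
        push_cast
        ring
    have H2 : ∀ c : ℤ, ∀ u : ℂ, (∀ x y : ℤ, u ≠ (x:ℂ) + (y:ℂ) * τ) → ∀ v : ℂ,
        PhiTilde 1 (m:ℝ) (s:ℝ) τ u (v + (c:ℂ) * τ)
        = mexp (-(((m:ℝ):ℂ)) * (c:ℂ) * u) * PhiTilde 1 (m:ℝ) (s:ℝ) τ u v := by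
      intro c
      induction c using Int.induction_on with
      | zero =>
        intro u hu v
        norm_num [mexp_zero]
      | succ k ih =>
        intro u hu v
        have e : v + (((k:ℤ) + 1 : ℤ):ℂ) * τ = (v + ((k:ℤ):ℂ) * τ) + τ := by push_cast; ring
        rw [show (((k:ℤ) + 1 : ℤ):ℂ) = (((k:ℤ):ℂ) + 1) by push_cast; ring] at e ⊢
        rw [e, phiTilde_shift2 m hm (s:ℝ) τ u (v + ((k:ℤ):ℂ) * τ) hτ hu, ih u hu v,
          ← mul_assoc, ← mexp_add]
        congr 2
        push_cast
        ring
      | pred k ih =>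
        intro u hu v
        have step := phiTilde_shift2 m hm (s:ℝ) τ u (v + ((-(k:ℤ) - 1 : ℤ):ℂ) * τ) hτ hu
        have e : (v + ((-(k:ℤ) - 1 : ℤ):ℂ) * τ) + τ = v + ((-(k:ℤ) : ℤ):ℂ) * τ := by
          push_cast; ring
        rw [e, ih u hu v] at step
        have key : PhiTilde 1 (m:ℝ) (s:ℝ) τ u (v + ((-(k:ℤ) - 1 : ℤ):ℂ) * τ)
            = mexp ((((m:ℝ):ℂ)) * u) *
              (mexp (-(((m:ℝ):ℂ)) * ((-(k:ℤ) : ℤ):ℂ) * u) * PhiTilde 1 (m:ℝ) (s:ℝ) τ u v) := by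
          rw [step, ← mul_assoc, ← mexp_add,
            show (((m:ℝ):ℂ)) * u + -(((m:ℝ):ℂ)) * u = 0 by ring, mexp_zero, one_mul]
        rw [show ((-(k:ℤ) - 1 : ℤ):ℂ) = (-((k:ℤ):ℂ) - 1) by push_cast; ring] at key ⊢
        rw [key, ← mul_assoc, ← mexp_add]
        congr 2
        push_cast
        ring
    calc PhiTilde 1 (m:ℝ) (s:ℝ) τ (z₁ + (a:ℂ) * τ) (z₂ + (b:ℂ) * τ)
        = mexp (-(((m:ℝ):ℂ)) * (b:ℂ) * (z₁ + (a:ℂ) * τ)) *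
            PhiTilde 1 (m:ℝ) (s:ℝ) τ (z₁ + (a:ℂ) * τ) z₂ := H2 b (z₁ + (a:ℂ) * τ) (hz' a) z₂
      _ = mexp (-(((m:ℝ):ℂ)) * (b:ℂ) * (z₁ + (a:ℂ) * τ)) *
            (mexp (-(((m:ℝ):ℂ)) * (a:ℂ) * z₂) * PhiTilde 1 (m:ℝ) (s:ℝ) τ z₁ z₂) := by
          rw [H1 a z₂]
      _ = mexp (-(m : ℂ) * ((b : ℂ) * z₁ + (a : ℂ) * z₂)) * mexp (τ * (-((m : ℂ) * a * b))) *
            PhiTilde 1 (m:ℝ) (s:ℝ) τ z₁ z₂ := by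
          rw [← mul_assoc, ← mexp_add, ← mexp_add]
          congr 2
          push_cast
          ring
  · exact phiTilde_int m hm s a b τ z₁ z₂
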